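/- Let A ∈ ℝ^{m×n} preserve Chebyshev systems, v⁽⁰⁾ ∈ ℝⁿ Chebyshev, and let u⁽ᵏ⁾ = φ(A, v⁽ᵏ⁻¹⁾), v⁽ᵏ⁾ = ψ(A, u⁽ᵏ⁾) for k ≥ 1. Then ‖A - u⁽ᵏ⁾(v⁽ᵏ⁻¹⁾)ᵀ‖_C ≥ ‖A - u⁽ᵏ⁾(v⁽ᵏ⁾)ᵀ‖_C ≥ ‖A - u⁽ᵏ⁺¹⁾(v⁽ᵏ⁾)ᵀ‖_C for all k ≥ 1. -/
import Mathlib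


open Filter

/-- A vector is Chebyshev if all of its components are non-zero. -/
def Cheb {n : ℕ} (v : Fin n → ℝ) : Prop := ∀ i, v i ≠ 0

/-- `mu a v` is the (unique, when `v` is Chebyshev) minimizer of `u ↦ ‖a - u • v‖`,
where `‖·‖` is the sup-norm on `Fin n → ℝ`. -/
noncomputable def mu {n : ℕ} (a v : Fin n → ℝ) : ℝ :=
  Classical.epsilon fun t : ℝ => ∀ u : ℝ, ‖a - t • v‖ ≤ ‖a - u • v‖

noncomputable def phi {m n : ℕ} (A : Fin m → Fin n → ℝ) (v : Fin n → ℝ) : Fin m → ℝ :=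
  fun i => mu (A i) v

noncomputable def psi {m n : ℕ} (A : Fin m → Fin n → ℝ) (u : Fin m → ℝ) : Fin n → ℝ :=
  fun j => mu (fun i => A i j) u

/-- `A` preserves Chebyshev systems. -/
def PreservesCheb {m n : ℕ} (A : Fin m → Fin n → ℝ) : Prop :=
  (∀ v : Fin n → ℝ, Cheb v → Cheb (phi A v)) ∧ (∀ u : Fin m → ℝ, Cheb u → Cheb (psi A u))

/-- A vector is alternance-free if exactly one component attains the max absolute value. -/
def AlternanceFree {n : ℕ} (a : Fin n → ℝ) : Prop := ∃! i, |a i| = ‖a‖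

/-- Chebyshev norm of the residual `A - u vᵀ`. -/
noncomputable def Cerr {m n : ℕ} (A : Fin m → Fin n → ℝ) (u : Fin m → ℝ) (v : Fin n → ℝ) : ℝ :=
  ⨆ i, ⨆ j, |A i j - u i * v j|

/-- Chebyshev norm of a matrix. -/
noncomputable def CnormM {m n : ℕ} (A : Fin m → Fin n → ℝ) : ℝ :=
  ⨆ i, ⨆ j, |A i j|

/-- The sequence `v⁽ᵏ⁾` of the alternating minimization method started at `v0`. -/
noncomputable def vseq {m n : ℕ} (A : Fin m → Fin n → ℝ) (v0 : Fin n → ℝ) : ℕ → Fin n → ℝ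
  | 0 => v0
  | k + 1 => psi A (phi A (vseq A v0 k))

lemma exists_mu_min {n : ℕ} (a v : Fin n → ℝ) :
    ∃ t : ℝ, ∀ u : ℝ, ‖a - t • v‖ ≤ ‖a - u • v‖ := by
  by_cases hv : v = 0
  · exact ⟨0, fun u => by simp [hv]⟩
  · have hvn : 0 < ‖v‖ := norm_pos_iff.mpr hv
    have hcont : Continuous fun t : ℝ => ‖a - t • v‖ :=
      (continuous_const.sub (continuous_id.smul continuous_const)).norm
    have hco : Tendsto (fun t : ℝ => ‖a - t • v‖) (cocompact ℝ) atTop := by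
      have h1 : Tendsto (fun t : ℝ => ‖t‖ * ‖v‖ - ‖a‖) (cocompact ℝ) atTop :=
        tendsto_atTop_add_const_right _ _
          (tendsto_norm_cocompact_atTop.atTop_mul_const hvn)
      refine tendsto_atTop_mono (fun t => ?_) h1
      have h2 : ‖t • v‖ - ‖a‖ ≤ ‖a - t • v‖ := by
        have := norm_sub_norm_le (t • v) a
        have h3 : ‖t • v - a‖ = ‖a - t • v‖ := norm_sub_rev _ _
        linarith
      simpa [norm_smul] using h2
    obtain ⟨t, ht⟩ := hcont.exists_forall_le hco
    exact ⟨t, ht⟩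

lemma mu_spec {n : ℕ} (a v : Fin n → ℝ) (u : ℝ) :
    ‖a - mu a v • v‖ ≤ ‖a - u • v‖ :=
  Classical.epsilon_spec (exists_mu_min a v) u

lemma cerr_nonneg {m n : ℕ} (A : Fin m → Fin n → ℝ) (u : Fin m → ℝ) (v : Fin n → ℝ) :
    0 ≤ Cerr A u v :=
  Real.iSup_nonneg fun _ => Real.iSup_nonneg fun _ => abs_nonneg _

lemma le_cerr {m n : ℕ} (A : Fin m → Fin n → ℝ) (u : Fin m → ℝ) (v : Fin n → ℝ)
    (i : Fin m) (j : Fin n) : |A i j - u i * v j| ≤ Cerr A u v := by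
  have h1 : |A i j - u i * v j| ≤ ⨆ j', |A i j' - u i * v j'| :=
    le_ciSup (f := fun j' => |A i j' - u i * v j'|)
      (Set.Finite.bddAbove (Set.finite_range _)) j
  exact h1.trans (le_ciSup (f := fun i' => ⨆ j', |A i' j' - u i' * v j'|)
    (Set.Finite.bddAbove (Set.finite_range _)) i)

theorem stmt8 {m n : ℕ} (hm : 2 ≤ m) (hn : 2 ≤ n) (A : Fin m → Fin n → ℝ)
    (hA : PreservesCheb A) (v0 : Fin n → ℝ) (hv0 : Cheb v0) (k : ℕ) :
    Cerr A (phi A (vseq A v0 k)) (vseq A v0 (k + 1)) ≤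
        Cerr A (phi A (vseq A v0 k)) (vseq A v0 k) ∧
      Cerr A (phi A (vseq A v0 (k + 1))) (vseq A v0 (k + 1)) ≤
        Cerr A (phi A (vseq A v0 k)) (vseq A v0 (k + 1)) := by
  haveI : Nonempty (Fin m) := ⟨⟨0, by omega⟩⟩
  haveI : Nonempty (Fin n) := ⟨⟨0, by omega⟩⟩
  set v := vseq A v0 k with hv
  set u := phi A (vseq A v0 k) with hu
  have hv1 : vseq A v0 (k + 1) = psi A u := rfl
  constructor
  · -- column step
    rw [hv1]
    refine ciSup_le fun i => ciSup_le fun j => ?_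
    have h1 : |A i j - u i * psi A u j| ≤ ‖(fun i' => A i' j) - psi A u j • u‖ := by
      have := norm_le_pi_norm ((fun i' => A i' j) - psi A u j • u) i
      simpa [Real.norm_eq_abs, mul_comm] using this
    have h2 : ‖(fun i' => A i' j) - psi A u j • u‖ ≤ ‖(fun i' => A i' j) - v j • u‖ :=
      mu_spec (fun i' => A i' j) u (v j)
    have h3 : ‖(fun i' => A i' j) - v j • u‖ ≤ Cerr A u v := by
      rw [pi_norm_le_iff_of_nonneg (cerr_nonneg A u v)]
      intro i'
      have := le_cerr A u v i' j
      simpa [Real.norm_eq_abs, mul_comm] using this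
    exact h1.trans (h2.trans h3)
  · -- row step
    rw [hv1]
    refine ciSup_le fun i => ciSup_le fun j => ?_
    have h1 : |A i j - phi A (psi A u) i * psi A u j| ≤ ‖A i - phi A (psi A u) i • psi A u‖ := by
      have := norm_le_pi_norm (A i - phi A (psi A u) i • psi A u) j
      simpa [Real.norm_eq_abs] using this
    have h2 : ‖A i - phi A (psi A u) i • psi A u‖ ≤ ‖A i - u i • psi A u‖ :=
      mu_spec (A i) (psi A u) (u i)
    have h3 : ‖A i - u i • psi A u‖ ≤ Cerr A u (psi A u) := by
      rw [pi_norm_le_iff_of_nonneg (cerr_nonneg A u (psi A u))]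
      intro j'
      have := le_cerr A u (psi A u) i j'
      simpa [Real.norm_eq_abs] using this
    exact h1.trans (h2.trans h3)
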